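/- Conversely, if the 5-subdivision G' of G has a vertex cover of size τ + 2|E|, then G has a vertex cover of size at most τ. -/

import Mathlib

/-- Vertices of the 5-subdivision of a graph on `V`: original vertices, plus 4 internal
vertices for each (oriented `a < b`) edge. -/
abbrev SubVert (V : Type*) := V ⊕ (V × V × Fin 4)

/-- One-directional adjacency of the 5-subdivision: for each edge `a —G— b` with `a < b`,
the path `a – (a,b,0) – (a,b,1) – (a,b,2) – (a,b,3) – b`. -/
def subdivRel {V : Type*} [LinearOrder V] (G : SimpleGraph V) :
    SubVert V → SubVert V → Prop
  | Sum.inl u, Sum.inr (a, b, i) =>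
      G.Adj a b ∧ a < b ∧ ((u = a ∧ i = 0) ∨ (u = b ∧ i = 3))
  | Sum.inr (a, b, i), Sum.inr (a', b', j) =>
      a = a' ∧ b = b' ∧ G.Adj a b ∧ a < b ∧ (i : ℕ) + 1 = (j : ℕ)
  | _, _ => False

/-- The 5-subdivision of `G`: every edge is replaced by a path of 5 edges. -/
def subdiv {V : Type*} [LinearOrder V] (G : SimpleGraph V) : SimpleGraph (SubVert V) where
  Adj x y := subdivRel G x y ∨ subdivRel G y x
  symm := ⟨fun _ _ h => h.symm⟩
  loopless := by
    refine ⟨?_⟩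
    rintro (u | ⟨a, b, i⟩) h
    · rcases h with h | h <;> exact h.elim
    · rcases h with ⟨-, -, -, -, h⟩ | ⟨-, -, -, -, h⟩ <;> omega

/-- `S` is a vertex cover of `H`. -/
def IsCover {W : Type*} (H : SimpleGraph W) (S : Set W) : Prop :=
  ∀ ⦃u v : W⦄, H.Adj u v → u ∈ S ∨ v ∈ S

/-- If the 5-subdivision of `G` has a vertex cover of size `τ + 2|E|`, then `G` has a
vertex cover of size at most `τ`. -/
theorem cover_of_subdiv_cover {V : Type*} [Fintype V] [LinearOrder V]
    (G : SimpleGraph V) [DecidableRel G.Adj] (τ : ℕ)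
    (S : Finset (SubVert V)) (hS : IsCover (subdiv G) (S : Set (SubVert V)))
    (hcard : S.card = τ + 2 * G.edgeFinset.card) :
    ∃ C : Finset V, IsCover G (C : Set V) ∧ C.card ≤ τ := by
  classical
  -- ordered edge pairs
  set P : Finset (V × V) :=
    Finset.univ.filter (fun p : V × V => G.Adj p.1 p.2 ∧ p.1 < p.2) with hPdef
  set n : V × V → ℕ :=
    (fun p => ∑ i : Fin 4, if Sum.inr (p.1, p.2, i) ∈ S then 1 else 0) with hndef
  -- basic cover consequences
  have hmid : ∀ a b : V, ∀ i j : Fin 4, G.Adj a b → a < b → (i : ℕ) + 1 = (j : ℕ) →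
      Sum.inr (a, b, i) ∈ S ∨ Sum.inr (a, b, j) ∈ S := by
    intro a b i j hab hlt hij
    have h := hS (u := (Sum.inr (a, b, i) : SubVert V)) (v := Sum.inr (a, b, j))
      (Or.inl ⟨rfl, rfl, hab, hlt, hij⟩)
    simpa using h
  have hend0 : ∀ a b : V, G.Adj a b → a < b →
      Sum.inl a ∈ S ∨ Sum.inr (a, b, (0 : Fin 4)) ∈ S := by
    intro a b hab hlt
    have h := hS (u := (Sum.inl a : SubVert V)) (v := Sum.inr (a, b, 0))
      (Or.inl ⟨hab, hlt, Or.inl ⟨rfl, rfl⟩⟩)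
    simpa using h
  have hend3 : ∀ a b : V, G.Adj a b → a < b →
      Sum.inl b ∈ S ∨ Sum.inr (a, b, (3 : Fin 4)) ∈ S := by
    intro a b hab hlt
    have h := hS (u := (Sum.inl b : SubVert V)) (v := Sum.inr (a, b, 3))
      (Or.inl ⟨hab, hlt, Or.inr ⟨rfl, rfl⟩⟩)
    simpa using h
  have hn2 : ∀ p ∈ P, 2 ≤ n p := by
    intro p hp
    rw [hPdef, Finset.mem_filter] at hp
    obtain ⟨-, hab, hlt⟩ := hp
    have h01 := hmid p.1 p.2 0 1 hab hlt (by decide)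
    have h23 := hmid p.1 p.2 2 3 hab hlt (by decide)
    simp only [hndef, Fin.sum_univ_four]
    rcases h01 with h | h <;> rcases h23 with h' | h' <;>
      simp only [h, h', if_true] <;> split_ifs <;> omega
  set Q : Finset (V × V) :=
    P.filter (fun p => Sum.inl p.1 ∉ S ∧ Sum.inl p.2 ∉ S) with hQdef
  have hn3 : ∀ p ∈ Q, 3 ≤ n p := by
    intro p hp
    rw [hQdef, Finset.mem_filter] at hp
    obtain ⟨hpP, ha, hb⟩ := hp
    rw [hPdef, Finset.mem_filter] at hpP
    obtain ⟨-, hab, hlt⟩ := hpP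
    have h0 : Sum.inr (p.1, p.2, (0 : Fin 4)) ∈ S :=
      (hend0 p.1 p.2 hab hlt).resolve_left ha
    have h3 : Sum.inr (p.1, p.2, (3 : Fin 4)) ∈ S :=
      (hend3 p.1 p.2 hab hlt).resolve_left hb
    have h12 := hmid p.1 p.2 1 2 hab hlt (by decide)
    simp only [hndef, Fin.sum_univ_four]
    rcases h12 with h | h <;> simp only [h, h0, h3, if_true] <;> split_ifs <;> omega
  -- counting within S
  set S₀ : Finset (SubVert V) := S.filter (fun x => x.isLeft) with hS₀def
  set S₁ : Finset (SubVert V) :=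
    S.filter (fun x => ∃ a b : V, ∃ i : Fin 4, x = Sum.inr (a, b, i) ∧ (a, b) ∈ P)
    with hS₁def
  have hdisj : Disjoint S₀ S₁ := by
    rw [Finset.disjoint_left]
    intro x hx0 hx1
    rw [hS₀def, Finset.mem_filter] at hx0
    rw [hS₁def, Finset.mem_filter] at hx1
    obtain ⟨a, b, i, rfl, -⟩ := hx1.2
    simp at hx0
  have hsub : S₀ ∪ S₁ ⊆ S := by
    intro x hx
    rcases Finset.mem_union.1 hx with h | h
    · exact (Finset.mem_filter.1 h).1
    · exact (Finset.mem_filter.1 h).1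
  have hcount : S₀.card + S₁.card ≤ S.card := by
    rw [← Finset.card_union_of_disjoint hdisj]
    exact Finset.card_le_card hsub
  -- fiberwise count of S₁
  have hfib : S₁.card = ∑ p ∈ P, n p := by
    have key : ∀ x ∈ S₁,
        (fun x : SubVert V => match x with
          | Sum.inl v => (v, v)
          | Sum.inr (a, b, _) => (a, b)) x ∈ P := by
      intro x hx
      rw [hS₁def, Finset.mem_filter] at hx
      obtain ⟨-, a, b, i, rfl, hP⟩ := hx
      exact hP
    rw [Finset.card_eq_sum_card_fiberwise key]
    refine Finset.sum_congr rfl (fun p hp => ?_)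
    have hset : S₁.filter (fun x => (match x with
          | Sum.inl v => (v, v)
          | Sum.inr (a, b, _) => (a, b)) = p)
        = (Finset.univ.filter (fun i : Fin 4 => Sum.inr (p.1, p.2, i) ∈ S)).image
            (fun i => (Sum.inr (p.1, p.2, i) : SubVert V)) := by
      ext x
      simp only [Finset.mem_filter, Finset.mem_image, Finset.mem_univ, true_and,
        hS₁def]
      constructor
      · rintro ⟨⟨hxS, a, b, i, rfl, -⟩, hkey⟩
        simp only at hkey
        refine ⟨i, ?_⟩
        rw [← hkey]
        exact ⟨hxS, rfl⟩
      · rintro ⟨i, hiS, rfl⟩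
        exact ⟨⟨hiS, p.1, p.2, i, rfl, by simpa using hp⟩, rfl⟩
    rw [hset, Finset.card_image_of_injective _ (by intro i j h; simpa using h),
      Finset.card_filter]
  -- sum lower bound
  have hsumlb : 2 * P.card + Q.card ≤ ∑ p ∈ P, n p := by
    have : ∑ p ∈ P, (2 + if p ∈ Q then 1 else 0) ≤ ∑ p ∈ P, n p := by
      refine Finset.sum_le_sum (fun p hp => ?_)
      by_cases hq : p ∈ Q
      · have := hn3 p hq; simp [hq]; omega
      · have := hn2 p hp; simp [hq]; omega
    calc 2 * P.card + Q.card
        = ∑ p ∈ P, 2 + ∑ p ∈ P, (if p ∈ Q then 1 else 0) := by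
          rw [Finset.sum_const, Finset.sum_ite_mem, smul_eq_mul]
          have : P ∩ Q = Q := Finset.inter_eq_right.2 (Finset.filter_subset _ _)
          rw [this, Finset.sum_const, smul_eq_mul]
          ring
      _ = ∑ p ∈ P, (2 + if p ∈ Q then 1 else 0) := (Finset.sum_add_distrib).symm
      _ ≤ ∑ p ∈ P, n p := this
  -- |P| = |E|
  have hPE : P.card = G.edgeFinset.card := by
    refine Finset.card_nbij (fun p => s(p.1, p.2)) ?_ ?_ ?_
    · intro p hp
      simp only [Finset.mem_coe, hPdef, Finset.mem_filter] at hp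
      simpa [SimpleGraph.mem_edgeFinset] using hp.2.1
    · intro p hp q hq h
      simp only [hPdef, Finset.coe_filter, Set.mem_setOf_eq] at hp hq
      rw [Sym2.eq_iff] at h
      rcases h with ⟨h1, h2⟩ | ⟨h1, h2⟩
      · exact Prod.ext h1 h2
      · have h' := hp.2.2
        rw [h1, h2] at h'
        exact absurd hq.2.2 (asymm h')
    · intro e he
      rw [Finset.mem_coe, SimpleGraph.mem_edgeFinset] at he
      induction e using Sym2.inductionOn with
      | hf u v =>
        rw [SimpleGraph.mem_edgeSet] at he
        rcases lt_or_gt_of_ne he.ne with hlt | hgt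
        · exact ⟨(u, v), by simp [hPdef, he, hlt], rfl⟩
        · exact ⟨(v, u), by simp [hPdef, he.symm, hgt], Sym2.eq_swap⟩
  -- the cover C
  set C : Finset V :=
    (Finset.univ.filter (fun v => Sum.inl v ∈ S)) ∪ Q.image Prod.fst with hCdef
  have hCcover : IsCover G (C : Set V) := by
    intro u v huv
    have hmem : ∀ a b : V, G.Adj a b → a < b → a ∈ C ∨ b ∈ C := by
      intro a b hab hlt
      by_cases ha : Sum.inl a ∈ S
      · exact Or.inl (by simp [hCdef, ha])
      by_cases hb : Sum.inl b ∈ S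
      · exact Or.inr (by simp [hCdef, hb])
      · refine Or.inl (Finset.mem_union_right _ ?_)
        refine Finset.mem_image.2 ⟨(a, b), ?_, rfl⟩
        simp [hQdef, hPdef, hab, hlt, ha, hb]
    rcases lt_trichotomy u v with hlt | heq | hgt
    · simpa using hmem u v huv hlt
    · exact absurd (heq ▸ huv) (G.loopless.irrefl u)
    · have := hmem v u huv.symm hgt
      simpa [Or.comm] using this
  refine ⟨C, hCcover, ?_⟩
  -- cardinality bound
  have hfilt : (Finset.univ.filter (fun v => Sum.inl v ∈ S)).card = S₀.card := by
    refine Finset.card_nbij (fun v => Sum.inl v) ?_ ?_ ?_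
    · intro v hv
      simp only [Finset.mem_coe, Finset.mem_filter, Finset.mem_univ, true_and] at hv
      simp [hS₀def, hv]
    · intro a _ b _ h
      simpa using h
    · intro x hx
      simp only [Finset.coe_filter, Set.mem_setOf_eq, hS₀def] at hx ⊢
      obtain ⟨hxS, hleft⟩ := hx
      rcases x with v | y
      · exact ⟨v, by simpa using hxS, rfl⟩
      · simp at hleft
  have hCle : C.card ≤ S₀.card + Q.card := by
    calc C.card ≤ (Finset.univ.filter (fun v => Sum.inl v ∈ S)).card
          + (Q.image Prod.fst).card := Finset.card_union_le _ _
      _ ≤ S₀.card + Q.card := by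
          rw [hfilt]
          exact Nat.add_le_add_left (Finset.card_image_le) _
  omega
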